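/- Let p and q be the regular-simplex-with-flaps configurations of N = (d+1)² points in E^d (p with inward flaps, q with outward flaps). Then there is no continuous expansion from p to q in E^{2d-1}: there do not exist continuous functions f_i : [0,1] → E^{2d-1}, i = 1,...,N, with f_i(0) = ι(p_i), f_i(1) = ι(q_i), and t ↦ |f_i(t) - f_j(t)| non-decreasing for all i < j, where ι : E^d → E^{2d-1} is the standard inclusion. -/

import Mathlib

open scoped RealInnerProductSpace

/-- Standard inclusion of `E^d` into `E^e`, padding with zeros. -/
def stdIncl (d e : ℕ) (u : EuclideanSpace ℝ (Fin d)) : EuclideanSpace ℝ (Fin e) :=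
  WithLp.toLp 2 fun m => if h : (m : ℕ) < d then u ⟨m, h⟩ else 0

/-- Index set for the configurations: the `d+1` simplex vertices together with the
flap vertices, one for each ordered pair `(i, j)` of distinct indices
(the vertex `b^i_j`, resp. `c^i_j`, of the `i`-th flap corresponding to `u j`). -/
def FlapIndex (d : ℕ) : Type :=
  Fin (d + 1) ⊕ {x : Fin (d + 1) × Fin (d + 1) // x.1 ≠ x.2}

section Prelim
variable {F : Type*} [NormedAddCommGroup F] [InnerProductSpace ℝ F]

lemma stdIncl_sub (d e : ℕ) (x y : EuclideanSpace ℝ (Fin d)) :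
    stdIncl d e (x - y) = stdIncl d e x - stdIncl d e y := by
  ext m
  simp only [stdIncl, PiLp.sub_apply]
  split <;> simp

lemma stdIncl_inner (d e : ℕ) (h : d ≤ e) (x y : EuclideanSpace ℝ (Fin d)) :
    ⟪stdIncl d e x, stdIncl d e y⟫ = ⟪x, y⟫ := by
  simp only [PiLp.inner_apply, RCLike.inner_apply, conj_trivial]
  rw [show (∑ m : Fin e, stdIncl d e y m * stdIncl d e x m)
      = ∑ m ∈ Finset.univ.map (Fin.castLEEmb h), stdIncl d e y m * stdIncl d e x m from
    (Finset.sum_subset (Finset.subset_univ _) ?_).symm, Finset.sum_map]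
  · apply Finset.sum_congr rfl
    intro i _
    simp [stdIncl, Fin.castLEEmb, Fin.castLE, i.isLt]
  · intro m _ hm
    have : ¬ ((m : ℕ) < d) := by
      intro hlt
      exact hm (Finset.mem_map.2 ⟨⟨m, hlt⟩, Finset.mem_univ _, by simp [Fin.castLEEmb, Fin.castLE]⟩)
    simp [stdIncl, this]

lemma stdIncl_norm (d e : ℕ) (h : d ≤ e) (x : EuclideanSpace ℝ (Fin d)) :
    ‖stdIncl d e x‖ = ‖x‖ := by
  have h1 := stdIncl_inner d e h x x
  rw [real_inner_self_eq_norm_sq, real_inner_self_eq_norm_sq] at h1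
  exact sq_eq_sq₀ (norm_nonneg _) (norm_nonneg _) |>.mp h1

lemma polar4 (a b c e : F) :
    ⟪a - b, c - e⟫ = (‖a - e‖ ^ 2 + ‖b - c‖ ^ 2 - ‖a - c‖ ^ 2 - ‖b - e‖ ^ 2) / 2 := by
  rw [norm_sub_sq_real a e, norm_sub_sq_real b c, norm_sub_sq_real a c, norm_sub_sq_real b e,
    inner_sub_left, inner_sub_right, inner_sub_right]
  ring

lemma li_of_neg_inner {n : ℕ} (v : Fin (n + 1) → F)
    (h : ∀ i j, i ≠ j → ⟪v i, v j⟫ < 0) :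
    LinearIndependent ℝ (fun i : Fin n => v i.succ) := by
  rw [Fintype.linearIndependent_iff]
  intro c hc
  classical
  set P := Finset.univ.filter (fun i : Fin n => 0 < c i) with hP
  set N := Finset.univ.filter (fun i : Fin n => c i < 0) with hN
  set x := ∑ i ∈ P, c i • v i.succ with hx
  set y := ∑ i ∈ N, (-c i) • v i.succ with hy
  have hdisj : Disjoint P N := by
    rw [Finset.disjoint_left]
    intro i hiP hiN
    simp only [hP, hN, Finset.mem_filter] at hiP hiN
    exact absurd hiP.2 (not_lt.2 hiN.2.le)
  have hsplit : ∑ i ∈ P, c i • v i.succ + ∑ i ∈ N, c i • v i.succ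
      = ∑ i : Fin n, c i • v i.succ := by
    rw [← Finset.sum_union hdisj]
    apply Finset.sum_subset (Finset.subset_univ _)
    intro i _ hi
    simp only [Finset.mem_union, hP, hN, Finset.mem_filter, Finset.mem_univ,
      true_and, not_or, not_lt] at hi
    have : c i = 0 := le_antisymm hi.1 hi.2
    simp [this]
  have hxy : x = y := by
    have hxy0 : x - y = 0 := by
      rw [hx, hy, sub_eq_add_neg, ← Finset.sum_neg_distrib]
      simp only [neg_smul, neg_neg]
      rw [hsplit, hc]
    exact sub_eq_zero.mp hxy0
  -- inner x y is a sum of nonpositive terms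
  have hinner_xy : ⟪x, y⟫ = ∑ i ∈ P, ∑ j ∈ N, (c i * (-c j)) * ⟪v i.succ, v j.succ⟫ := by
    rw [hx, hy, sum_inner]
    apply Finset.sum_congr rfl
    intro i _
    rw [inner_sum]
    apply Finset.sum_congr rfl
    intro j _
    rw [real_inner_smul_left, real_inner_smul_right]
    ring
  have hterm : ∀ i ∈ P, ∀ j ∈ N, (c i * (-c j)) * ⟪v i.succ, v j.succ⟫ < 0 := by
    intro i hiP j hjN
    simp only [hP, hN, Finset.mem_filter] at hiP hjN
    have hij : i ≠ j := fun hij => absurd hiP.2 (not_lt.2 (hij ▸ hjN.2.le))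
    have hsucc : i.succ ≠ j.succ := fun hh => hij (Fin.succ_injective _ hh)
    exact mul_neg_of_pos_of_neg (mul_pos hiP.2 (neg_pos.2 hjN.2)) (h _ _ hsucc)
  -- if both P and N nonempty, contradiction
  have hPN : P = ∅ ∨ N = ∅ := by
    by_contra hno
    push_neg at hno
    have hPn : P.Nonempty := hno.1
    have hNn : N.Nonempty := hno.2
    have hlt : ⟪x, y⟫ < 0 := by
      rw [hinner_xy]
      have h1 : ∑ i ∈ P, ∑ j ∈ N, (c i * (-c j)) * ⟪v i.succ, v j.succ⟫
          < ∑ i ∈ P, (0 : ℝ) := by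
        apply Finset.sum_lt_sum_of_nonempty hPn
        intro i hi
        have h2 : ∑ j ∈ N, (c i * (-c j)) * ⟪v i.succ, v j.succ⟫ < ∑ j ∈ N, (0 : ℝ) := by
          apply Finset.sum_lt_sum_of_nonempty hNn
          intro j hj
          exact hterm i hi j hj
        simpa using h2
      simpa using h1
    have hge : (0 : ℝ) ≤ ⟪x, y⟫ := hxy ▸ real_inner_self_nonneg
    linarith
  -- now one of P, N is empty; conclude both are, via pairing with v 0
  have hzero : ∀ (S : Finset (Fin n)) (sgn : ℝ → ℝ),
      (∀ i ∈ S, 0 < sgn (c i)) → (∑ i ∈ S, sgn (c i) • v i.succ = 0) → S = ∅ := by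
    intro S sgn hpos hsum
    by_contra hSne
    have hSn : S.Nonempty := Finset.nonempty_of_ne_empty hSne
    have h0 : ⟪v 0, ∑ i ∈ S, sgn (c i) • v i.succ⟫ = 0 := by rw [hsum, inner_zero_right]
    rw [inner_sum] at h0
    have hlt : ∑ i ∈ S, ⟪v 0, sgn (c i) • v i.succ⟫ < 0 := by
      have h1 : ∑ i ∈ S, ⟪v 0, sgn (c i) • v i.succ⟫ < ∑ i ∈ S, (0 : ℝ) := by
        apply Finset.sum_lt_sum_of_nonempty hSn
        intro i hi
        rw [real_inner_smul_right]
        exact mul_neg_of_pos_of_neg (hpos i hi) (h _ _ (Fin.succ_ne_zero i).symm)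
      simpa using h1
    linarith
  have hPe : P = ∅ ∧ N = ∅ := by
    rcases hPN with hNe | hNe
    · refine ⟨hNe, ?_⟩
      have hy0 : y = 0 := by
        have hx0 : x = 0 := by rw [hx, hNe]; simp
        rw [← hxy, hx0]
      exact hzero N (fun t => -t) (fun i hi => by
          simp only [hN, Finset.mem_filter] at hi; show (0:ℝ) < -c i; linarith [hi.2])
        (by rw [← hy, hy0])
    · refine ⟨?_, hNe⟩
      have hx0 : x = 0 := by
        have hy0 : y = 0 := by rw [hy, hNe]; simp
        rw [hxy, hy0]
      exact hzero P (fun t => t) (fun i hi => by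
          simp only [hP, Finset.mem_filter] at hi; exact hi.2)
        (by rw [← hx, hx0])
  intro i
  by_contra hci
  rcases lt_or_gt_of_ne hci with hlt | hgt
  · have : i ∈ N := by simp [hN, hlt]
    rw [hPe.2] at this; exact absurd this (Finset.notMem_empty i)
  · have : i ∈ P := by simp [hP, hgt]
    rw [hPe.1] at this; exact absurd this (Finset.notMem_empty i)

end Prelim

set_option maxHeartbeats 1600000

theorem no_continuous_expansion_below_double_dimension
    (d : ℕ) (hd : 2 ≤ d) (s : ℝ) (hs : 0 < s)
    (u : Fin (d + 1) → EuclideanSpace ℝ (Fin d))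
    (hnorm : ∀ i, ‖u i‖ = 1)
    (hinner : ∀ i j, i ≠ j → ⟪u i, u j⟫ = -1 / d)
    (p q : FlapIndex d → EuclideanSpace ℝ (Fin d))
    (hp : p = Sum.elim u (fun x => u x.1.2 + s • u x.1.1))
    (hq : q = Sum.elim u (fun x => u x.1.2 - s • u x.1.1)) :
    ¬ ∃ f : FlapIndex d → ℝ → EuclideanSpace ℝ (Fin (2 * d - 1)),
      (∀ i, ContinuousOn (f i) (Set.Icc 0 1)) ∧
      (∀ i, f i 0 = stdIncl d (2 * d - 1) (p i)) ∧
      (∀ i, f i 1 = stdIncl d (2 * d - 1) (q i)) ∧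
      (∀ i j, i ≠ j → MonotoneOn (fun t => ‖f i t - f j t‖) (Set.Icc (0 : ℝ) 1)) := by
  rintro ⟨f, hcont, h0, h1, hmono⟩
  subst hp hq
  set p : FlapIndex d → EuclideanSpace ℝ (Fin d) :=
    Sum.elim u (fun x => u x.1.2 + s • u x.1.1) with hp
  set q : FlapIndex d → EuclideanSpace ℝ (Fin d) :=
    Sum.elim u (fun x => u x.1.2 - s • u x.1.1) with hq
  have hde : d ≤ 2 * d - 1 := by omega
  have hdR : (0:ℝ) < d := by
    have : 0 < d := by omega
    exact_mod_cast this
  have hd1R : (0:ℝ) < (d:ℝ) + 1 := by linarith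
  have h01 : (0:ℝ) ∈ Set.Icc (0:ℝ) 1 := by norm_num
  have h11 : (1:ℝ) ∈ Set.Icc (0:ℝ) 1 := by norm_num
  have huu : ∀ i, ⟪u i, u i⟫ = 1 := by
    intro i
    rw [real_inner_self_eq_norm_sq, hnorm i]; norm_num
  -- the sum of the simplex vertices is zero
  have husum : ∑ k, u k = 0 := by
    have hzero : ∀ k, ⟪u k, ∑ l, u l⟫ = 0 := by
      intro k
      rw [inner_sum]
      have hsplit : ∀ l : Fin (d+1),
          ⟪u k, u l⟫ = (-1/(d:ℝ)) + (if l = k then (1:ℝ) + 1/(d:ℝ) else 0) := by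
        intro l
        by_cases hlk : l = k
        · subst hlk; rw [huu]; simp; field_simp; ring
        · rw [hinner k l (Ne.symm hlk)]; simp [hlk]
      rw [Finset.sum_congr rfl (fun l _ => hsplit l)]
      rw [Finset.sum_add_distrib, Finset.sum_const, Finset.sum_ite_eq' Finset.univ k]
      simp only [Finset.mem_univ, if_true, Finset.card_univ, Fintype.card_fin, nsmul_eq_mul]
      push_cast
      field_simp
      ring
    have : ⟪∑ k, u k, ∑ l, u l⟫ = 0 := by
      rw [sum_inner]
      exact Finset.sum_eq_zero (fun k _ => hzero k)
    exact inner_self_eq_zero.mp this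
  -- shorthand for the embedding
  have hiota : ∀ x y : EuclideanSpace ℝ (Fin d),
      ⟪stdIncl d (2*d-1) x, stdIncl d (2*d-1) y⟫ = ⟪x, y⟫ := stdIncl_inner d _ hde
  have hiotan : ∀ x y : EuclideanSpace ℝ (Fin d),
      ‖stdIncl d (2*d-1) x - stdIncl d (2*d-1) y‖ = ‖x - y‖ := by
    intro x y; rw [← stdIncl_sub]; exact stdIncl_norm d _ hde _
  -- distances that agree at the endpoints are constant
  have constDist : ∀ a b : FlapIndex d, ‖p a - p b‖ = ‖q a - q b‖ →
      ∀ t ∈ Set.Icc (0:ℝ) 1, ‖f a t - f b t‖ = ‖p a - p b‖ := by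
    intro a b hab t ht
    by_cases heq : a = b
    · subst heq; simp
    · have e0 : ‖f a 0 - f b 0‖ = ‖p a - p b‖ := by rw [h0 a, h0 b, hiotan]
      have e1 : ‖f a 1 - f b 1‖ = ‖q a - q b‖ := by rw [h1 a, h1 b, hiotan]
      have m := hmono a b heq
      have l1 := m h01 ht ht.1
      have l2 := m ht h11 ht.2
      simp only at l1 l2
      rw [e0] at l1; rw [e1, ← hab] at l2
      linarith
  -- inner products of difference vectors, for quadruples with constant pairwise distances
  have constInner : ∀ a b c e : FlapIndex d,
      ‖p a - p e‖ = ‖q a - q e‖ → ‖p b - p c‖ = ‖q b - q c‖ →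
      ‖p a - p c‖ = ‖q a - q c‖ → ‖p b - p e‖ = ‖q b - q e‖ →
      ∀ t ∈ Set.Icc (0:ℝ) 1, ⟪f a t - f b t, f c t - f e t⟫ = ⟪p a - p b, p c - p e⟫ := by
    intro a b c e hae hbc hac hbe t ht
    rw [polar4, polar4 (p a)]
    rw [constDist a e hae t ht, constDist b c hbc t ht,
      constDist a c hac t ht, constDist b e hbe t ht]
  -- index bookkeeping
  have h01fin : (0 : Fin (d+1)) ≠ 1 := by
    have : d + 1 ≥ 3 := by omega
    simp [Fin.ext_iff]
    omega
  set j₀ : Fin (d+1) → Fin (d+1) := fun i => if i = 0 then 1 else 0 with hj₀def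
  have hj₀ : ∀ i, i ≠ j₀ i := by
    intro i
    by_cases h : i = 0
    · subst h; simp [hj₀def, h01fin]
    · simp [hj₀def, h]
  have hthird : ∀ i k : Fin (d+1), ∃ j, j ≠ i ∧ j ≠ k := by
    intro i k
    by_contra hcon
    push_neg at hcon
    have hsub : (Finset.univ : Finset (Fin (d+1))) ⊆ {i, k} := by
      intro j _
      rcases eq_or_ne j i with hji | hji
      · simp [hji]
      · simp [hcon j hji]
    have hcard := Finset.card_le_card hsub
    have h2 : ({i, k} : Finset (Fin (d+1))).card ≤ 2 :=
      le_trans (Finset.card_insert_le _ _) (by simp)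
    simp only [Finset.card_univ, Fintype.card_fin] at hcard
    omega
  set ix : ∀ (i j : Fin (d+1)), i ≠ j → FlapIndex d :=
    fun i j h => Sum.inr ⟨(i, j), h⟩ with hixdef
  have hp_ix : ∀ i j (h : i ≠ j), p (ix i j h) = u j + s • u i := fun _ _ _ => rfl
  have hq_ix : ∀ i j (h : i ≠ j), q (ix i j h) = u j - s • u i := fun _ _ _ => rfl
  have hp_inl : ∀ i, p (Sum.inl i) = u i := fun _ => rfl
  have hq_inl : ∀ i, q (Sum.inl i) = u i := fun _ => rfl
  have hixne : ∀ i j (h : i ≠ j) k, ix i j h ≠ Sum.inl k := by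
    intro i j h k hc
    rw [hixdef] at hc
    exact Sum.inr_ne_inl hc
  -- endpoint distance equalities
  have hE1 : ∀ i j : Fin (d+1), ‖p (Sum.inl i) - p (Sum.inl j)‖ = ‖q (Sum.inl i) - q (Sum.inl j)‖ :=
    fun i j => rfl
  have hE2 : ∀ i j k (h : i ≠ j), k ≠ i →
      ‖p (ix i j h) - p (Sum.inl k)‖ = ‖q (ix i j h) - q (Sum.inl k)‖ := by
    intro i j k h hki
    rw [hp_ix, hq_ix, hp_inl, hq_inl]
    have hperp : ⟪u j - u k, s • u i⟫ = 0 := by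
      rw [inner_sub_left, real_inner_smul_right, real_inner_smul_right,
        real_inner_comm (u i) (u j), real_inner_comm (u i) (u k),
        hinner i j h, hinner i k (Ne.symm hki)]
      ring
    have hsq : ‖u j + s • u i - u k‖ ^ 2 = ‖u j - s • u i - u k‖ ^ 2 := by
      rw [show u j + s • u i - u k = (u j - u k) + s • u i by abel,
        show u j - s • u i - u k = (u j - u k) - s • u i by abel,
        norm_add_sq_real (u j - u k) (s • u i), norm_sub_sq_real (u j - u k) (s • u i), hperp]
      ring
    exact sq_eq_sq₀ (norm_nonneg _) (norm_nonneg _) |>.mp hsq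
  have hE2' : ∀ i j k (h : i ≠ j), k ≠ i →
      ‖p (Sum.inl k) - p (ix i j h)‖ = ‖q (Sum.inl k) - q (ix i j h)‖ := by
    intro i j k h hki
    exact (norm_sub_rev _ _).trans ((hE2 i j k h hki).trans (norm_sub_rev _ _))
  have hE4 : ∀ i j k (h : i ≠ j) (h' : k ≠ j), i ≠ k →
      ‖p (ix i j h) - p (ix k j h')‖ = ‖q (ix i j h) - q (ix k j h')‖ := by
    intro i j k h h' hik
    rw [hp_ix, hq_ix, hp_ix, hq_ix]
    rw [show u j + s • u i - (u j + s • u k) = s • u i - s • u k by abel,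
      show u j - s • u i - (u j - s • u k) = -(s • u i - s • u k) by abel, norm_neg]
  -- the flap vectors
  set W : Fin (d+1) → ℝ → EuclideanSpace ℝ (Fin (2*d-1)) :=
    fun i t => f (ix i (j₀ i) (hj₀ i)) t - f (Sum.inl (j₀ i)) t with hWdef
  have hWnorm : ∀ i, ∀ t ∈ Set.Icc (0:ℝ) 1, ‖W i t‖ = s := by
    intro i t ht
    rw [hWdef]
    have := constDist (ix i (j₀ i) (hj₀ i)) (Sum.inl (j₀ i))
      (hE2 i (j₀ i) (j₀ i) (hj₀ i) (Ne.symm (hj₀ i))) t ht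
    rw [this, hp_ix, hp_inl]
    rw [show u (j₀ i) + s • u i - u (j₀ i) = s • u i by abel, norm_smul, hnorm]
    simp [abs_of_pos hs]
  have hWself : ∀ i, ∀ t ∈ Set.Icc (0:ℝ) 1, ⟪W i t, W i t⟫ = s^2 := by
    intro i t ht
    rw [real_inner_self_eq_norm_sq, hWnorm i t ht]
  -- the flap vector does not depend on the choice of base point
  have hWdef' : ∀ i j (h : i ≠ j), ∀ t ∈ Set.Icc (0:ℝ) 1,
      f (ix i j h) t - f (Sum.inl j) t = W i t := by
    intro i j h t ht
    have hXn : ‖f (ix i j h) t - f (Sum.inl j) t‖ = s := by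
      rw [constDist (ix i j h) (Sum.inl j) (hE2 i j j h (Ne.symm h)) t ht, hp_ix, hp_inl]
      rw [show u j + s • u i - u j = s • u i by abel, norm_smul, hnorm]
      simp [abs_of_pos hs]
    have hXW : ⟪f (ix i j h) t - f (Sum.inl j) t, W i t⟫ = s^2 := by
      rw [hWdef]
      rw [constInner (ix i j h) (Sum.inl j) (ix i (j₀ i) (hj₀ i)) (Sum.inl (j₀ i))
        (hE2 i j (j₀ i) h (Ne.symm (hj₀ i))) (hE2' i (j₀ i) j (hj₀ i) (Ne.symm h))
        (by rw [hp_ix, hq_ix, hp_ix, hq_ix,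
          show u j + s • u i - (u (j₀ i) + s • u i) = u j - u (j₀ i) by abel,
          show u j - s • u i - (u (j₀ i) - s • u i) = u j - u (j₀ i) by abel])
        (hE1 j (j₀ i)) t ht]
      rw [hp_ix, hp_inl, hp_ix, hp_inl,
        show u j + s • u i - u j = s • u i by abel,
        show u (j₀ i) + s • u i - u (j₀ i) = s • u i by abel,
        real_inner_smul_left, real_inner_smul_right, huu]
      ring
    have hzero : ‖(f (ix i j h) t - f (Sum.inl j) t) - W i t‖ ^ 2 = 0 := by
      rw [norm_sub_sq_real, hXn, hXW, hWnorm i t ht]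
      ring
    have := pow_eq_zero_iff (n := 2) (by norm_num) |>.mp hzero
    rw [norm_eq_zero, sub_eq_zero] at this
    exact this
  -- inner products between distinct flap vectors are constant
  have hWW : ∀ i k, i ≠ k → ∀ t ∈ Set.Icc (0:ℝ) 1, ⟪W i t, W k t⟫ = -s^2/d := by
    intro i k hik t ht
    obtain ⟨j, hji, hjk⟩ := hthird i k
    rw [← hWdef' i j (Ne.symm hji) t ht, ← hWdef' k j (Ne.symm hjk) t ht]
    rw [constInner (ix i j (Ne.symm hji)) (Sum.inl j) (ix k j (Ne.symm hjk)) (Sum.inl j)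
      (hE2 i j j (Ne.symm hji) hji) (hE2' k j j (Ne.symm hjk) hjk)
      (hE4 i j k (Ne.symm hji) (Ne.symm hjk) hik) (hE1 j j) t ht]
    rw [hp_ix, hp_inl, hp_ix,
      show u j + s • u i - u j = s • u i by abel,
      show u j + s • u k - u j = s • u k by abel,
      real_inner_smul_left, real_inner_smul_right, hinner i k hik]
    field_simp
  -- flap vectors are orthogonal to the opposite face
  have hWperp : ∀ i j k, j ≠ i → k ≠ i → ∀ t ∈ Set.Icc (0:ℝ) 1,
      ⟪W i t, f (Sum.inl j) t - f (Sum.inl k) t⟫ = 0 := by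
    intro i j k hji hki t ht
    rw [hWdef]
    rw [constInner (ix i (j₀ i) (hj₀ i)) (Sum.inl (j₀ i)) (Sum.inl j) (Sum.inl k)
      (hE2 i (j₀ i) k (hj₀ i) hki) (hE1 (j₀ i) j)
      (hE2 i (j₀ i) j (hj₀ i) hji) (hE1 (j₀ i) k) t ht]
    rw [hp_ix, hp_inl, hp_inl, hp_inl,
      show u (j₀ i) + s • u i - u (j₀ i) = s • u i by abel,
      real_inner_smul_left, inner_sub_right,
      hinner i j (Ne.symm hji), hinner i k (Ne.symm hki)]
    ring
    -- the monotone quantity g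
  set g : Fin (d+1) → ℝ → ℝ :=
    fun i t => ⟪W i t, f (Sum.inl (j₀ i)) t - f (Sum.inl i) t⟫ with hgdef
  have hAA : ∀ i j, ∀ t ∈ Set.Icc (0:ℝ) 1,
      ‖f (Sum.inl i) t - f (Sum.inl j) t‖ = ‖u i - u j‖ := by
    intro i j t ht
    rw [constDist _ _ (hE1 i j) t ht, hp_inl, hp_inl]
  have hgform : ∀ i, ∀ t ∈ Set.Icc (0:ℝ) 1,
      ‖f (ix i (j₀ i) (hj₀ i)) t - f (Sum.inl i) t‖^2
        = s^2 + ‖u (j₀ i) - u i‖^2 + 2 * g i t := by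
    intro i t ht
    rw [show f (ix i (j₀ i) (hj₀ i)) t - f (Sum.inl i) t
        = W i t + (f (Sum.inl (j₀ i)) t - f (Sum.inl i) t) by simp only [hWdef]; abel,
      norm_add_sq_real, hWnorm i t ht, hAA (j₀ i) i t ht]
    simp only [hgdef]
    ring
  have hgmono : ∀ i, ∀ t₁ ∈ Set.Icc (0:ℝ) 1, ∀ t₂ ∈ Set.Icc (0:ℝ) 1, t₁ ≤ t₂ →
      g i t₁ ≤ g i t₂ := by
    intro i t₁ ht₁ t₂ ht₂ h12
    have hm := hmono (ix i (j₀ i) (hj₀ i)) (Sum.inl i) (hixne i (j₀ i) (hj₀ i) i) ht₁ ht₂ h12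
    simp only at hm
    have hsq := pow_le_pow_left₀ (norm_nonneg _) hm 2
    have e1 := hgform i t₁ ht₁
    have e2 := hgform i t₂ ht₂
    linarith
  have hgcont : ∀ i, ContinuousOn (g i) (Set.Icc (0:ℝ) 1) := by
    intro i
    simp only [hgdef, hWdef]
    exact ContinuousOn.inner ((hcont _).sub (hcont _)) ((hcont _).sub (hcont _))
  have hg0 : ∀ i, g i 0 < 0 := by
    intro i
    simp only [hgdef, hWdef]
    simp only [h0, h0 (Sum.inl (j₀ i)), h0 (Sum.inl i)]
    rw [← stdIncl_sub, ← stdIncl_sub, hiota, hp_ix, hp_inl, hp_inl]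
    rw [show u (j₀ i) + s • u i - u (j₀ i) = s • u i by abel,
      real_inner_smul_left, inner_sub_right, hinner i (j₀ i) (hj₀ i), huu]
    have hneg : (-1)/(d:ℝ) - 1 < 0 := by
      have := div_neg_of_neg_of_pos (by norm_num : (-1:ℝ) < 0) hdR
      linarith
    exact mul_neg_of_pos_of_neg hs hneg
  have hg1 : ∀ i, 0 < g i 1 := by
    intro i
    simp only [hgdef, hWdef]
    simp only [h1, h1 (Sum.inl (j₀ i)), h1 (Sum.inl i)]
    rw [← stdIncl_sub, ← stdIncl_sub, hiota, hq_ix, hq_inl, hq_inl]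
    rw [show u (j₀ i) - s • u i - u (j₀ i) = -(s • u i) by abel,
      inner_neg_left, real_inner_smul_left, inner_sub_right, hinner i (j₀ i) (hj₀ i), huu]
    have hneg : (-1)/(d:ℝ) - 1 < 0 := by
      have := div_neg_of_neg_of_pos (by norm_num : (-1:ℝ) < 0) hdR
      linarith
    have := mul_neg_of_pos_of_neg hs hneg
    linarith
  -- crossing times
  set S : Fin (d+1) → Set ℝ := fun i => Set.Icc 0 1 ∩ g i ⁻¹' Set.Iic 0 with hSdef
  have hSne : ∀ i, (S i).Nonempty := by
    intro i
    exact ⟨0, h01, le_of_lt (hg0 i)⟩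
  have hSbdd : ∀ i, BddAbove (S i) := by
    intro i
    exact BddAbove.mono Set.inter_subset_left bddAbove_Icc
  have hSclosed : ∀ i, IsClosed (S i) := by
    intro i
    exact (hgcont i).preimage_isClosed_of_isClosed isClosed_Icc isClosed_Iic
  set τ : Fin (d+1) → ℝ := fun i => sSup (S i) with hτdef
  have hτmem : ∀ i, τ i ∈ S i :=
    fun i => IsClosed.csSup_mem (hSclosed i) (hSne i) (hSbdd i)
  have hτ01 : ∀ i, τ i ∈ Set.Icc (0:ℝ) 1 := fun i => (hτmem i).1
  have hτle : ∀ i, g i (τ i) ≤ 0 := fun i => (hτmem i).2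
  have hτlt1 : ∀ i, τ i < 1 := by
    intro i
    rcases lt_or_eq_of_le (hτ01 i).2 with h | h
    · exact h
    · exfalso
      have := hτle i
      rw [h] at this
      exact absurd this (not_le.2 (hg1 i))
  have hgpos : ∀ i, ∀ t, τ i < t → t ≤ 1 → 0 < g i t := by
    intro i t h1t h2t
    by_contra hle
    push_neg at hle
    have htmem : t ∈ S i := ⟨⟨le_trans (hτ01 i).1 (le_of_lt h1t), h2t⟩, hle⟩
    have h2 : t ≤ τ i := by
      simp only [hτdef]
      exact le_csSup (hSbdd i) htmem
    linarith
  have hgτ0 : ∀ i, g i (τ i) = 0 := by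
    intro i
    refine le_antisymm (hτle i) ?_
    have hC : IsClosed (Set.Icc (0:ℝ) 1 ∩ g i ⁻¹' Set.Ici 0) :=
      (hgcont i).preimage_isClosed_of_isClosed isClosed_Icc isClosed_Ici
    have hsub : Set.Ioc (τ i) 1 ⊆ Set.Icc (0:ℝ) 1 ∩ g i ⁻¹' Set.Ici 0 := by
      intro t ht
      exact ⟨⟨le_trans (hτ01 i).1 ht.1.le, ht.2⟩, (hgpos i t ht.1 ht.2).le⟩
    have hmemcl : τ i ∈ closure (Set.Ioc (τ i) 1) := by
      rw [closure_Ioc (ne_of_lt (hτlt1 i))]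
      exact ⟨le_refl _, (hτlt1 i).le⟩
    have : τ i ∈ Set.Icc (0:ℝ) 1 ∩ g i ⁻¹' Set.Ici 0 := by
      rw [← hC.closure_eq]
      exact closure_mono hsub hmemcl
    exact this.2
  -- the critical time
  have hne_univ : (Finset.univ : Finset (Fin (d+1))).Nonempty := Finset.univ_nonempty
  set T : ℝ := Finset.univ.sup' hne_univ τ with hTdef
  obtain ⟨i₀, -, hi₀⟩ := Finset.exists_mem_eq_sup' hne_univ τ
  rw [← hTdef] at hi₀
  have hT01 : T ∈ Set.Icc (0:ℝ) 1 := by rw [hi₀]; exact hτ01 i₀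
  have hτleT : ∀ i, τ i ≤ T := fun i => Finset.le_sup' τ (Finset.mem_univ i)
  have hgT : ∀ i, 0 ≤ g i T := by
    intro i
    have := hgmono i (τ i) (hτ01 i) T hT01 (hτleT i)
    rw [hgτ0 i] at this
    exact this
  have hgTi₀ : g i₀ T = 0 := by
    rw [hi₀]
    exact hgτ0 i₀
  -- the configuration at time T
  set Y : Fin (d+1) → EuclideanSpace ℝ (Fin (2*d-1)) :=
    fun j => ((d:ℝ)+1)⁻¹ • ∑ k, (f (Sum.inl j) T - f (Sum.inl k) T) with hYdef
  set β : Fin (d+1) → ℝ := fun i => g i T / ((d:ℝ)+1) with hβdef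
  have hβnonneg : ∀ i, 0 ≤ β i := by
    intro i
    simp only [hβdef]
    exact div_nonneg (hgT i) hd1R.le
  have hβi₀ : β i₀ = 0 := by
    simp only [hβdef]
    rw [hgTi₀]
    simp
  have hWAA : ∀ i j k, ⟪W i T, f (Sum.inl j) T - f (Sum.inl k) T⟫
      = (if j = i then 0 else g i T) - (if k = i then 0 else g i T) := by
    intro i j k
    have key : ∀ j : Fin (d+1), ⟪W i T, f (Sum.inl j) T - f (Sum.inl i) T⟫
        = if j = i then 0 else g i T := by
      intro j
      by_cases hji : j = i
      · subst hji
        simp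
      · rw [if_neg hji]
        rw [show f (Sum.inl j) T - f (Sum.inl i) T
            = (f (Sum.inl j) T - f (Sum.inl (j₀ i)) T)
              + (f (Sum.inl (j₀ i)) T - f (Sum.inl i) T) by abel,
          inner_add_right, hWperp i j (j₀ i) hji (Ne.symm (hj₀ i)) T hT01]
        simp only [hgdef]
        ring
    rw [show f (Sum.inl j) T - f (Sum.inl k) T
        = (f (Sum.inl j) T - f (Sum.inl i) T) - (f (Sum.inl k) T - f (Sum.inl i) T) by abel,
      inner_sub_right, key j, key k]
  have hcardsum : ∀ (c : ℝ) (i : Fin (d+1)),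
      (∑ k : Fin (d+1), (if k = i then 0 else c)) = d * c := by
    intro c i
    have : ∀ k : Fin (d+1), (if k = i then (0:ℝ) else c) = c - (if k = i then c else 0) := by
      intro k
      by_cases hk : k = i <;> simp [hk]
    rw [Finset.sum_congr rfl (fun k _ => this k), Finset.sum_sub_distrib,
      Finset.sum_const, Finset.sum_ite_eq' Finset.univ i (fun _ => c)]
    simp only [Finset.mem_univ, if_true, Finset.card_univ, Fintype.card_fin, nsmul_eq_mul]
    push_cast
    ring
  have hWY : ∀ i j, ⟪W i T, Y j⟫ = if j = i then -((d:ℝ) * β i) else β i := by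
    intro i j
    simp only [hYdef]
    rw [real_inner_smul_right, inner_sum]
    rw [Finset.sum_congr rfl (fun k _ => hWAA i j k), Finset.sum_sub_distrib,
      Finset.sum_const, hcardsum (g i T) i]
    simp only [Finset.card_univ, Fintype.card_fin, nsmul_eq_mul]
    by_cases hji : j = i
    · rw [if_pos hji, if_pos hji]
      simp only [hβdef]
      push_cast
      field_simp
      ring
    · rw [if_neg hji, if_neg hji]
      simp only [hβdef]
      push_cast
      field_simp
      ring
  have hsumcollapse : ∀ i, (∑ k : Fin (d+1), (u i - u k)) = ((d:ℝ)+1) • u i := by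
    intro i
    rw [Finset.sum_sub_distrib, husum, Finset.sum_const]
    simp only [Finset.card_univ, Fintype.card_fin, sub_zero]
    rw [← Nat.cast_smul_eq_nsmul ℝ]
    push_cast
    ring_nf
  have hcollapse : ∀ i j : Fin (d+1),
      (∑ k : Fin (d+1), ∑ l : Fin (d+1), ⟪u i - u k, u j - u l⟫)
        = ((d:ℝ)+1)^2 * ⟪u i, u j⟫ := by
    intro i j
    rw [Finset.sum_congr rfl (fun k (_ : k ∈ Finset.univ) =>
      (inner_sum Finset.univ (fun l => u j - u l) (u i - u k)).symm)]
    rw [← sum_inner, hsumcollapse i, hsumcollapse j,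
      real_inner_smul_left, real_inner_smul_right]
    ring
  have hYY : ∀ i j, ⟪Y i, Y j⟫ = if i = j then (1:ℝ) else -1/d := by
    intro i j
    simp only [hYdef]
    rw [real_inner_smul_left, real_inner_smul_right, sum_inner]
    rw [Finset.sum_congr rfl (fun k (_ : k ∈ Finset.univ) =>
      inner_sum Finset.univ (fun l => f (Sum.inl j) T - f (Sum.inl l) T)
        (f (Sum.inl i) T - f (Sum.inl k) T))]
    rw [Finset.sum_congr rfl (fun k (_ : k ∈ Finset.univ) =>
      Finset.sum_congr rfl (fun l (_ : l ∈ Finset.univ) =>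
        constInner (Sum.inl i) (Sum.inl k) (Sum.inl j) (Sum.inl l)
          (hE1 i l) (hE1 k j) (hE1 i j) (hE1 k l) T hT01))]
    simp only [hp_inl]
    rw [hcollapse i j]
    by_cases hij : i = j
    · subst hij
      rw [if_pos rfl, huu]
      field_simp
    · rw [if_neg hij, hinner i j hij]
      field_simp
  have hYnorm1 : ∀ i, ‖Y i‖ = 1 := by
    intro i
    have h1 := hYY i i
    rw [if_pos rfl, real_inner_self_eq_norm_sq] at h1
    have : ‖Y i‖^2 = 1^2 := by rw [h1]; norm_num
    exact sq_eq_sq₀ (norm_nonneg _) zero_le_one |>.mp this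
  have hdβ : ∀ i, (d:ℝ) * β i ≤ s := by
    intro i
    have hcs := abs_real_inner_le_norm (W i T) (Y i)
    rw [hWY i i, if_pos rfl, hWnorm i T hT01, hYnorm1 i] at hcs
    rw [abs_neg, abs_of_nonneg (mul_nonneg hdR.le (hβnonneg i))] at hcs
    linarith
  set Z : Fin (d+1) → EuclideanSpace ℝ (Fin (2*d-1)) :=
    fun i => W i T + ((d:ℝ) * β i) • Y i with hZdef
  have hZZ : ∀ i j, i ≠ j → ⟪Z i, Z j⟫ = -s^2/d + d*(β i * β j) := by
    intro i j hij
    simp only [hZdef]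
    simp only [inner_add_left, inner_add_right, real_inner_smul_left, real_inner_smul_right]
    rw [hWW i j hij T hT01, real_inner_comm (W j T) (Y i)]
    rw [hWY i j, if_neg (Ne.symm hij), hYY i j, if_neg hij, hWY j i, if_neg hij]
    field_simp
    ring
  have hZself : ∀ i, ⟪Z i, Z i⟫ = s^2 - ((d:ℝ)*β i)^2 := by
    intro i
    simp only [hZdef]
    simp only [inner_add_left, inner_add_right, real_inner_smul_left, real_inner_smul_right]
    rw [hWself i T hT01, real_inner_comm (W i T) (Y i)]
    rw [hWY i i, if_pos rfl, hYY i i, if_pos rfl]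
    ring
  have hYZ : ∀ i j, ⟪Y i, Z j⟫ = 0 := by
    intro i j
    simp only [hZdef]
    simp only [inner_add_left, inner_add_right, real_inner_smul_left, real_inner_smul_right]
    rw [real_inner_comm (W j T) (Y i), hWY j i, hYY i j]
    by_cases hij : i = j
    · rw [if_pos hij, if_pos hij]
      ring
    · rw [if_neg hij, if_neg hij]
      field_simp
      ring
  have hβlt : ∀ i, (d:ℝ) * β i < s := by
    intro i
    rcases lt_or_eq_of_le (hdβ i) with h | h
    · exact h
    · exfalso
      have hZ0 : Z i = 0 := by
        have hz : ⟪Z i, Z i⟫ = 0 := by rw [hZself i, h]; ring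
        exact inner_self_eq_zero.mp hz
      have hii₀ : i₀ ≠ i := by
        intro he
        rw [← he, hβi₀, mul_zero] at h
        exact absurd h.symm (ne_of_gt hs)
      have h1 := hZZ i₀ i hii₀
      rw [hZ0, inner_zero_right, hβi₀] at h1
      simp only [zero_mul, mul_zero, add_zero] at h1
      have hpos : 0 < s^2/(d:ℝ) := by positivity
      rw [neg_div] at h1
      linarith
  have hZneg : ∀ i j, i ≠ j → ⟪Z i, Z j⟫ < 0 := by
    intro i j hij
    rw [hZZ i j hij]
    have hβj : β j < s/(d:ℝ) := by
      have := hβlt j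
      rw [lt_div_iff₀ hdR]
      linarith [this]
    have h1 : ((d:ℝ)*β i) * β j < s * (s/d) :=
      mul_lt_mul'' (hβlt i) hβj (mul_nonneg hdR.le (hβnonneg i)) (hβnonneg j)
    have h2 : s * (s/(d:ℝ)) = s^2/d := by ring
    rw [h2] at h1
    have h3 : (d:ℝ)*(β i * β j) = ((d:ℝ)*β i)*β j := by ring
    calc -s^2/(d:ℝ) + (d:ℝ)*(β i * β j) = -s^2/(d:ℝ) + ((d:ℝ)*β i)*β j := by rw [h3]
      _ < -s^2/(d:ℝ) + s^2/(d:ℝ) := by linarith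
      _ = 0 := by ring
  have hYneg : ∀ i j : Fin (d+1), i ≠ j → ⟪Y i, Y j⟫ < 0 := by
    intro i j hij
    rw [hYY i j, if_neg hij]
    rw [neg_div]
    have : (0:ℝ) < 1/d := by positivity
    linarith
  -- linear independence and dimension count
  have LIY := li_of_neg_inner (n := d) Y hYneg
  have LIZ := li_of_neg_inner (n := d) Z hZneg
  have hspan : Submodule.span ℝ (Set.range (fun i : Fin d => Z i.succ))
      ≤ (Submodule.span ℝ (Set.range (fun i : Fin d => Y i.succ)))ᗮ := by
    rw [Submodule.span_le]
    rintro x ⟨i, rfl⟩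
    rw [SetLike.mem_coe, Submodule.mem_orthogonal]
    intro v hv
    induction hv using Submodule.span_induction with
    | mem x h =>
        obtain ⟨j, rfl⟩ := h
        exact hYZ j.succ i.succ
    | zero => simp
    | add x y hx hy ihx ihy => rw [inner_add_left, ihx, ihy]; ring
    | smul c x hx ihx => rw [real_inner_smul_left, ihx]; ring
  have hdisj : Disjoint (Submodule.span ℝ (Set.range (fun i : Fin d => Y i.succ)))
      (Submodule.span ℝ (Set.range (fun i : Fin d => Z i.succ))) :=
    (Submodule.orthogonal_disjoint _).mono_right hspan
  have LIsum := LIY.sum_type LIZ hdisj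
  have hcard := LIsum.fintype_card_le_finrank
  rw [Fintype.card_sum, Fintype.card_fin, finrank_euclideanSpace_fin] at hcard
  omega
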